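/- Let a > 0, let m ≥ 3 be an integer, λ = (m-2)/2, z > 0 and w ∈ [-1,1]. Then the family of complex numbers ( e^{-iπk/a} ((λ+k)/λ) z^{-λ} J_{2(k+λ)/a}((2/a) z^{a/2}) C_k^λ(w) )_{k∈ℕ} is (absolutely) summable; in particular the series defining the kernel K_a^m(z,w) of the radially deformed Fourier transform converges. -/

import Mathlib

open scoped Real

/-- Bessel function of the first kind `J_ν(z)`, defined by its series. -/
noncomputable def besselJ (ν z : ℝ) : ℝ :=
  ∑' j : ℕ, ((-1 : ℝ) ^ j / (j.factorial * Real.Gamma ((j : ℝ) + ν + 1))) *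
    (z / 2) ^ (2 * (j : ℝ) + ν)

/-- Gegenbauer polynomial `C_k^λ(w)`. -/
noncomputable def gegenbauerC (lam : ℝ) (k : ℕ) (w : ℝ) : ℝ :=
  ∑ j ∈ Finset.range (k / 2 + 1),
    ((-1 : ℝ) ^ j * Real.Gamma ((k : ℝ) - (j : ℝ) + lam) /
      (Real.Gamma lam * (j.factorial : ℝ) * ((k - 2 * j).factorial : ℝ))) *
      (2 * w) ^ (k - 2 * j)

/-- The `k`-th term of the series defining the kernel of the radially deformed
Fourier transform, with `λ = (m-2)/2`. -/
noncomputable def kernelTerm (a lam z w : ℝ) (k : ℕ) : ℂ :=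
  Complex.exp (-(Real.pi * (k : ℝ) / a) * Complex.I) *
    (((lam + (k : ℝ)) / lam : ℝ) : ℂ) * ((z ^ (-lam) : ℝ) : ℂ) *
    ((besselJ (2 * ((k : ℝ) + lam) / a) ((2 / a) * z ^ (a / 2)) : ℝ) : ℂ) *
    ((gegenbauerC lam k w : ℝ) : ℂ)

/-- The kernel `K_a^m(z,w)` of the radially deformed Fourier transform (for `m ≥ 3`). -/
noncomputable def deformedKernel (a : ℝ) (m : ℕ) (z w : ℝ) : ℂ :=
  ((a ^ (((m : ℝ) - 2) / a) : ℝ) : ℂ) * ((Real.Gamma (((m : ℝ) - 2 + a) / a) : ℝ) : ℂ) *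
    ∑' k : ℕ, kernelTerm a (((m : ℝ) - 2) / 2) z w k

lemma aux_gamma_le (ν : ℝ) (hν : 0 ≤ ν) (j : ℕ) :
    Real.Gamma (ν + 1) ≤ Real.Gamma ((j : ℝ) + ν + 1) := by
  induction j with
  | zero => simp
  | succ n ih =>
    have h1 : ((n + 1 : ℕ) : ℝ) + ν + 1 = ((n : ℝ) + ν + 1) + 1 := by push_cast; ring
    have h2 : Real.Gamma (((n : ℝ) + ν + 1) + 1) = ((n : ℝ) + ν + 1) * Real.Gamma ((n : ℝ) + ν + 1) :=
      Real.Gamma_add_one (by positivity)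
    rw [h1, h2]
    calc Real.Gamma (ν + 1) ≤ Real.Gamma ((n : ℝ) + ν + 1) := ih
      _ ≤ ((n : ℝ) + ν + 1) * Real.Gamma ((n : ℝ) + ν + 1) :=
          le_mul_of_one_le_left (Real.Gamma_pos_of_pos (by positivity)).le (by
            have : (0:ℝ) ≤ (n:ℝ) := Nat.cast_nonneg n
            linarith)

lemma besselJ_bound {ν x : ℝ} (hν : 0 ≤ ν) (hx : 0 < x) :
    |besselJ ν x| ≤ (x / 2) ^ ν * Real.exp ((x / 2) ^ 2) / Real.Gamma (ν + 1) := by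
  have ht : 0 < x / 2 := by positivity
  have hΓν : 0 < Real.Gamma (ν + 1) := Real.Gamma_pos_of_pos (by linarith)
  set t := x / 2 with htdef
  set f : ℕ → ℝ := fun j => ((-1 : ℝ) ^ j / (j.factorial * Real.Gamma ((j : ℝ) + ν + 1))) *
    t ^ (2 * (j : ℝ) + ν) with hf
  set g : ℕ → ℝ := fun j => t ^ ν / Real.Gamma (ν + 1) * ((t ^ 2) ^ j / j.factorial) with hg
  have habs : ∀ j, |f j| ≤ g j := by
    intro j
    have hΓj : 0 < Real.Gamma ((j : ℝ) + ν + 1) := Real.Gamma_pos_of_pos (by positivity)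
    have hfj : |f j| = t ^ (2 * (j : ℝ) + ν) / ((j.factorial : ℝ) * Real.Gamma ((j : ℝ) + ν + 1)) := by
      rw [hf]
      rw [abs_mul, abs_div, abs_pow, abs_neg, abs_one, one_pow,
        abs_of_pos (Real.rpow_pos_of_pos ht _), abs_of_pos (by positivity), one_div,
        inv_mul_eq_div]
    have hpow : t ^ (2 * (j : ℝ) + ν) = (t ^ 2) ^ j * t ^ ν := by
      rw [Real.rpow_add ht]
      congr 1
      rw [show (2 * (j : ℝ)) = ((2 * j : ℕ) : ℝ) by push_cast; ring, Real.rpow_natCast, pow_mul]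
    have hgj : g j = (t ^ 2) ^ j * t ^ ν / ((j.factorial : ℝ) * Real.Gamma (ν + 1)) := by
      rw [hg]; ring
    rw [hfj, hgj, hpow]
    apply div_le_div_of_nonneg_left (by positivity) (by positivity)
    have := aux_gamma_le ν hν j
    exact mul_le_mul_of_nonneg_left this (Nat.cast_nonneg _)
  have hgsum : Summable g := (Real.summable_pow_div_factorial (t ^ 2)).mul_left _
  have hfabs : Summable fun j => |f j| :=
    Summable.of_nonneg_of_le (fun j => abs_nonneg _) habs hgsum
  have h2 : |besselJ ν x| ≤ ∑' j, |f j| := by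
    have : besselJ ν x = ∑' j, f j := by rw [besselJ]
    rw [this, ← Real.norm_eq_abs]
    exact (norm_tsum_le_tsum_norm (by simpa [Real.norm_eq_abs] using hfabs)).trans
      (le_of_eq (by simp [Real.norm_eq_abs]))
  have h3 : ∑' j, |f j| ≤ ∑' j, g j := Summable.tsum_le_tsum habs hfabs hgsum
  have h4 : ∑' j, g j = t ^ ν / Real.Gamma (ν + 1) * ∑' j, ((t ^ 2) ^ j / (j.factorial : ℝ)) :=
    tsum_mul_left
  have h5 : ∑' j, ((t ^ 2) ^ j / (j.factorial : ℝ)) ≤ Real.exp (t ^ 2) :=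
    Summable.tsum_le_of_sum_range_le (Real.summable_pow_div_factorial _)
      (fun n => Real.sum_le_exp_of_nonneg (by positivity) n)
  calc |besselJ ν x| ≤ ∑' j, g j := h2.trans h3
    _ = t ^ ν / Real.Gamma (ν + 1) * ∑' j, ((t ^ 2) ^ j / (j.factorial : ℝ)) := h4
    _ ≤ t ^ ν / Real.Gamma (ν + 1) * Real.exp (t ^ 2) :=
        mul_le_mul_of_nonneg_left h5 (by positivity)
    _ = t ^ ν * Real.exp (t ^ 2) / Real.Gamma (ν + 1) := by ring
lemma fact_add_le (n d : ℕ) : (n + d).factorial ≤ (n + d) ^ d * n.factorial := by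
  induction d with
  | zero => simp
  | succ d ih =>
    have h1 : (n + (d + 1)).factorial = (n + d + 1) * (n + d).factorial := by
      rw [show n + (d + 1) = (n + d) + 1 by ring, Nat.factorial_succ]
    rw [h1]
    calc (n + d + 1) * (n + d).factorial ≤ (n + d + 1) * ((n + d) ^ d * n.factorial) :=
          Nat.mul_le_mul_left _ ih
      _ ≤ (n + d + 1) * ((n + d + 1) ^ d * n.factorial) :=
          Nat.mul_le_mul_left _ (Nat.mul_le_mul_right _ (Nat.pow_le_pow_left (by omega) d))
      _ = (n + (d + 1)) ^ (d + 1) * n.factorial := by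
          rw [show n + (d + 1) = n + d + 1 by ring, pow_succ]; ring

lemma gamma_add_nat_le {lam : ℝ} {L : ℕ} (hlam : 0 < lam) (hL1 : 1 ≤ L) (hlamL : lam ≤ (L : ℝ))
    (n : ℕ) : Real.Gamma (lam + n) ≤ Real.Gamma lam * ((L - 1 + n).factorial : ℝ) := by
  induction n with
  | zero =>
    simp only [Nat.cast_zero, add_zero]
    exact le_mul_of_one_le_right (Real.Gamma_pos_of_pos hlam).le
      (by exact_mod_cast Nat.one_le_iff_ne_zero.mpr (Nat.factorial_pos _).ne')
  | succ n ih =>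
    have h0 : lam + ((n + 1 : ℕ) : ℝ) = (lam + n) + 1 := by push_cast; ring
    have h2 : Real.Gamma ((lam + n) + 1) = (lam + n) * Real.Gamma (lam + n) :=
      Real.Gamma_add_one (by positivity)
    rw [h0, h2]
    have hfact : ((L - 1 + (n + 1)).factorial : ℝ) = ((L : ℝ) + n) * ((L - 1 + n).factorial : ℝ) := by
      rw [show L - 1 + (n + 1) = (L - 1 + n) + 1 by omega, Nat.factorial_succ]
      have : ((L - 1 + n + 1 : ℕ) : ℝ) = (L : ℝ) + n := by
        push_cast [Nat.cast_sub hL1]; ring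
      rw [Nat.cast_mul, this]
    have hLn : lam + n ≤ (L : ℝ) + n := by linarith
    calc (lam + n) * Real.Gamma (lam + n)
        ≤ (lam + n) * (Real.Gamma lam * ((L - 1 + n).factorial : ℝ)) :=
          mul_le_mul_of_nonneg_left ih (by positivity)
      _ ≤ ((L : ℝ) + n) * (Real.Gamma lam * ((L - 1 + n).factorial : ℝ)) :=
          mul_le_mul_of_nonneg_right hLn (by positivity)
      _ = Real.Gamma lam * ((L - 1 + (n + 1)).factorial : ℝ) := by rw [hfact]; ring

lemma gegenbauer_bound {lam : ℝ} {L : ℕ} (hlam : 0 < lam) (hL1 : 1 ≤ L) (hlamL : lam ≤ (L : ℝ))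
    (k : ℕ) {w : ℝ} (hw : |w| ≤ 1) :
    |gegenbauerC lam k w| ≤ 2 ^ k * ((L : ℝ) + k) ^ (L - 1) * Real.exp (((L : ℝ) + k) / 4) := by
  have hΓlam : 0 < Real.Gamma lam := Real.Gamma_pos_of_pos hlam
  have key : ∀ j ∈ Finset.range (k / 2 + 1),
      |((-1 : ℝ) ^ j * Real.Gamma ((k : ℝ) - (j : ℝ) + lam) /
        (Real.Gamma lam * (j.factorial : ℝ) * ((k - 2 * j).factorial : ℝ))) *
        (2 * w) ^ (k - 2 * j)| ≤
      ((L : ℝ) + k) ^ (L - 1) * 2 ^ k * ((((L : ℝ) + k) / 4) ^ j / (j.factorial : ℝ)) := by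
    intro j hj
    have hj2 : 2 * j ≤ k := by
      have := Finset.mem_range.mp hj
      omega
    have hjk : j ≤ k := by omega
    have hcast : (k : ℝ) - (j : ℝ) + lam = lam + ((k - j : ℕ) : ℝ) := by
      push_cast [Nat.cast_sub hjk]; ring
    have hΓpos : 0 < Real.Gamma ((k : ℝ) - (j : ℝ) + lam) := by
      rw [hcast]; exact Real.Gamma_pos_of_pos (by positivity)
    have hDpos : 0 < Real.Gamma lam * (j.factorial : ℝ) * ((k - 2 * j).factorial : ℝ) := by
      positivity
    have hB : |2 * w| ^ (k - 2 * j) ≤ (2 : ℝ) ^ (k - 2 * j) := by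
      apply pow_le_pow_left₀ (abs_nonneg _)
      rw [abs_mul]
      calc |(2 : ℝ)| * |w| ≤ 2 * 1 := by
            rw [abs_two]
            exact mul_le_mul_of_nonneg_left hw (by norm_num)
        _ = 2 := by norm_num
    have hΓle : Real.Gamma ((k : ℝ) - (j : ℝ) + lam) ≤
        Real.Gamma lam * (((L - 1 + (k - j)).factorial : ℕ) : ℝ) := by
      rw [hcast]; exact gamma_add_nat_le hlam hL1 hlamL (k - j)
    have hnat : (L - 1 + (k - j)).factorial ≤ (L + k) ^ (L - 1 + j) * (k - 2 * j).factorial := by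
      rw [show L - 1 + (k - j) = (k - 2 * j) + (L - 1 + j) by omega]
      exact (fact_add_le _ _).trans
        (Nat.mul_le_mul_right _ (Nat.pow_le_pow_left (by omega) _))
    have h2pow : (2 : ℝ) ^ (k - 2 * j) = 2 ^ k / 4 ^ j := by
      rw [eq_div_iff (by positivity)]
      rw [show (4 : ℝ) = 2 ^ 2 by norm_num, ← pow_mul, ← pow_add]
      congr 1
      omega
    calc |((-1 : ℝ) ^ j * Real.Gamma ((k : ℝ) - (j : ℝ) + lam) /
          (Real.Gamma lam * (j.factorial : ℝ) * ((k - 2 * j).factorial : ℝ))) *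
          (2 * w) ^ (k - 2 * j)|
        = Real.Gamma ((k : ℝ) - (j : ℝ) + lam) /
            (Real.Gamma lam * (j.factorial : ℝ) * ((k - 2 * j).factorial : ℝ)) *
            |2 * w| ^ (k - 2 * j) := by
          rw [abs_mul, abs_pow, abs_div, abs_mul, abs_pow, abs_neg, abs_one, one_pow, one_mul,
            abs_of_pos hΓpos, abs_of_pos hDpos]
      _ ≤ Real.Gamma ((k : ℝ) - (j : ℝ) + lam) /
            (Real.Gamma lam * (j.factorial : ℝ) * ((k - 2 * j).factorial : ℝ)) *
            (2 : ℝ) ^ (k - 2 * j) := by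
          exact mul_le_mul_of_nonneg_left hB (by positivity)
      _ ≤ Real.Gamma lam * (((L - 1 + (k - j)).factorial : ℕ) : ℝ) /
            (Real.Gamma lam * (j.factorial : ℝ) * ((k - 2 * j).factorial : ℝ)) *
            (2 : ℝ) ^ (k - 2 * j) := by
          exact mul_le_mul_of_nonneg_right ((div_le_div_iff_of_pos_right hDpos).mpr hΓle) (by positivity)
      _ ≤ Real.Gamma lam * ((((L + k) ^ (L - 1 + j) * (k - 2 * j).factorial : ℕ)) : ℝ) /
            (Real.Gamma lam * (j.factorial : ℝ) * ((k - 2 * j).factorial : ℝ)) *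
            (2 : ℝ) ^ (k - 2 * j) := by
          have : (((L - 1 + (k - j)).factorial : ℕ) : ℝ) ≤
              (((L + k) ^ (L - 1 + j) * (k - 2 * j).factorial : ℕ) : ℝ) := by
            exact_mod_cast hnat
          exact mul_le_mul_of_nonneg_right
            ((div_le_div_iff_of_pos_right hDpos).mpr (mul_le_mul_of_nonneg_left this hΓlam.le))
            (by positivity)
      _ = ((L : ℝ) + k) ^ (L - 1 + j) / (j.factorial : ℝ) * (2 : ℝ) ^ (k - 2 * j) := by
          have hcancel : Real.Gamma lam * ((((L + k) ^ (L - 1 + j) * (k - 2 * j).factorial : ℕ)) : ℝ) /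
              (Real.Gamma lam * (j.factorial : ℝ) * ((k - 2 * j).factorial : ℝ)) =
              ((L : ℝ) + k) ^ (L - 1 + j) / (j.factorial : ℝ) := by
            push_cast
            rw [div_eq_div_iff hDpos.ne' (by positivity)]
            ring
          rw [hcancel]
      _ = ((L : ℝ) + k) ^ (L - 1) * 2 ^ k * ((((L : ℝ) + k) / 4) ^ j / (j.factorial : ℝ)) := by
          rw [pow_add, div_pow, h2pow]
          field_simp
  calc |gegenbauerC lam k w|
      ≤ ∑ j ∈ Finset.range (k / 2 + 1),
          |((-1 : ℝ) ^ j * Real.Gamma ((k : ℝ) - (j : ℝ) + lam) /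
            (Real.Gamma lam * (j.factorial : ℝ) * ((k - 2 * j).factorial : ℝ))) *
            (2 * w) ^ (k - 2 * j)| := by
        rw [gegenbauerC]
        exact Finset.abs_sum_le_sum_abs _ _
    _ ≤ ∑ j ∈ Finset.range (k / 2 + 1),
          ((L : ℝ) + k) ^ (L - 1) * 2 ^ k * ((((L : ℝ) + k) / 4) ^ j / (j.factorial : ℝ)) :=
        Finset.sum_le_sum key
    _ = ((L : ℝ) + k) ^ (L - 1) * 2 ^ k *
          ∑ j ∈ Finset.range (k / 2 + 1), ((((L : ℝ) + k) / 4) ^ j / (j.factorial : ℝ)) := by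
        rw [Finset.mul_sum]
    _ ≤ ((L : ℝ) + k) ^ (L - 1) * 2 ^ k * Real.exp (((L : ℝ) + k) / 4) :=
        mul_le_mul_of_nonneg_left (Real.sum_le_exp_of_nonneg (by positivity) _) (by positivity)
    _ = 2 ^ k * ((L : ℝ) + k) ^ (L - 1) * Real.exp (((L : ℝ) + k) / 4) := by ring
lemma one_div_gamma_le {ν : ℝ} (hν : 0 < ν) {q : ℕ} (hq : (q : ℝ) ≤ ν) :
    1 / Real.Gamma (ν + 1) ≤ Real.exp (ν + 1) / (q.factorial : ℝ) := by
  have hΓ : 0 < Real.Gamma (ν + 1) := Real.Gamma_pos_of_pos (by linarith)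
  have h1 : (((q + 1).factorial : ℕ) : ℝ) ≤ (ν + 1) * Real.Gamma (ν + 1) := by
    have e1 : (ν + 1) * Real.Gamma (ν + 1) = Real.Gamma (ν + 2) := by
      rw [show ν + 2 = (ν + 1) + 1 by ring]
      exact (Real.Gamma_add_one (by positivity)).symm
    have e2 : Real.Gamma ((q : ℝ) + 2) = (((q + 1).factorial : ℕ) : ℝ) := by
      have := Real.Gamma_nat_eq_factorial (q + 1)
      rw [← this]; congr 1; push_cast; ring
    rw [e1, ← e2]
    exact Real.Gamma_strictMonoOn_Ici.monotoneOn
      (Set.mem_Ici.mpr (by have : (0:ℝ) ≤ (q:ℝ) := Nat.cast_nonneg q; linarith : (2:ℝ) ≤ (q:ℝ) + 2))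
      (Set.mem_Ici.mpr (by linarith : (2:ℝ) ≤ ν + 2))
      (by linarith)
  have h2 : 1 / Real.Gamma (ν + 1) ≤ (ν + 1) / (((q + 1).factorial : ℕ) : ℝ) := by
    rw [div_le_div_iff₀ hΓ (by positivity)]
    linarith
  refine h2.trans ?_
  apply div_le_div₀ (by positivity)
  · linarith [Real.add_one_le_exp (ν + 1), Real.add_one_le_exp ν,
      (Real.exp_le_exp.mpr (by linarith : ν ≤ ν + 1))]
  · positivity
  · exact_mod_cast Nat.factorial_le (Nat.le_succ q)

lemma summable_geom_div_fact (S : ℝ) (hS : 0 ≤ S) (M : ℕ) (hM : M ≠ 0) :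
    Summable (fun k : ℕ => S ^ k / ((k / M).factorial : ℝ)) := by
  haveI : NeZero M := ⟨hM⟩
  have h1 : Summable (fun p : ℕ × Fin M => (S ^ M) ^ p.1 / (p.1.factorial : ℝ) * S ^ (p.2 : ℕ)) :=
    Summable.mul_of_nonneg (f := fun i : ℕ => (S ^ M) ^ i / (i.factorial : ℝ))
      (g := fun r : Fin M => S ^ (r : ℕ))
      (Real.summable_pow_div_factorial _) (Summable.of_finite)
      (fun i => by positivity) (fun r => by positivity)
  have h2 : Summable ((fun k : ℕ => S ^ k / ((k / M).factorial : ℝ)) ∘ (Nat.divModEquiv M).symm) := by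
    refine h1.congr fun p => ?_
    have hdiv : (p.1 * M + (p.2 : ℕ)) / M = p.1 := by
      rw [mul_comm, Nat.mul_add_div (Nat.pos_of_ne_zero hM), Nat.div_eq_of_lt p.2.isLt, add_zero]
    show (S ^ M) ^ p.1 / (p.1.factorial : ℝ) * S ^ (p.2 : ℕ) =
      S ^ (p.1 * M + (p.2 : ℕ)) / (((p.1 * M + (p.2 : ℕ)) / M).factorial : ℝ)
    rw [hdiv, pow_add, pow_mul]
    ring
  exact (Equiv.summable_iff _).mp h2


/-- The series defining the kernel of the radially deformed Fourier transform
converges absolutely. -/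
theorem kernel_series_summable (a : ℝ) (ha : 0 < a) (m : ℕ) (hm : 3 ≤ m)
    (z : ℝ) (hz : 0 < z) (w : ℝ) (hw : w ∈ Set.Icc (-1 : ℝ) 1) :
    Summable (fun k : ℕ => ‖kernelTerm a (((m : ℝ) - 2) / 2) z w k‖) ∧
    Summable (fun k : ℕ => kernelTerm a (((m : ℝ) - 2) / 2) z w k) := by
  obtain ⟨hw1, hw2⟩ := hw
  have habsw : |w| ≤ 1 := abs_le.mpr ⟨hw1, hw2⟩
  have hm' : (3 : ℝ) ≤ (m : ℝ) := by exact_mod_cast hm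
  set lam : ℝ := ((m : ℝ) - 2) / 2 with hlamdef
  have hlam : 0 < lam := by rw [hlamdef]; linarith
  set L : ℕ := m - 2 with hLdef
  have hL1 : 1 ≤ L := by omega
  have hLcast : (L : ℝ) = (m : ℝ) - 2 := by
    rw [hLdef]; push_cast [Nat.cast_sub (show 2 ≤ m by omega)]; ring
  have hlamL : lam ≤ (L : ℝ) := by rw [hLcast, hlamdef]; linarith
  have hx : 0 < 2 / a * z ^ (a / 2) := mul_pos (by positivity) (Real.rpow_pos_of_pos hz _)
  set x : ℝ := 2 / a * z ^ (a / 2) with hxdef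
  set t : ℝ := x / 2 with htdef
  have ht : 0 < t := by rw [htdef]; positivity
  set M : ℕ := ⌈a⌉₊ with hMdef
  have hM0 : M ≠ 0 := by rw [hMdef]; exact (Nat.ceil_pos.mpr ha).ne'
  have haM : a ≤ (M : ℝ) := by rw [hMdef]; exact Nat.le_ceil a
  have hν : ∀ k : ℕ, 0 < 2 * ((k : ℝ) + lam) / a := by
    intro k
    have : (0 : ℝ) ≤ (k : ℝ) := Nat.cast_nonneg k
    exact div_pos (by linarith) ha
  have hq : ∀ k : ℕ, ((k / M : ℕ) : ℝ) ≤ 2 * ((k : ℝ) + lam) / a := by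
    intro k
    have hk0 : (0 : ℝ) ≤ (k : ℝ) := Nat.cast_nonneg k
    have h1 : ((k / M : ℕ) : ℝ) ≤ (k : ℝ) / (M : ℝ) := Nat.cast_div_le
    have h2 : (k : ℝ) / (M : ℝ) ≤ (k : ℝ) / a :=
      div_le_div_of_nonneg_left hk0 ha haM
    have h3 : (k : ℝ) / a ≤ 2 * ((k : ℝ) + lam) / a :=
      (div_le_div_iff_of_pos_right ha).mpr (by linarith)
    linarith
  -- norm formula
  have hnorm : ∀ k : ℕ, ‖kernelTerm a lam z w k‖ =
      (lam + (k : ℝ)) / lam * z ^ (-lam) *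
        |besselJ (2 * ((k : ℝ) + lam) / a) x| * |gegenbauerC lam k w| := by
    intro k
    simp only [kernelTerm]
    rw [norm_mul, norm_mul, norm_mul, norm_mul]
    have he : ‖Complex.exp ((-(Real.pi * (k : ℝ) / a) : ℝ) * Complex.I)‖ = 1 := by
      rw [Complex.norm_exp_ofReal_mul_I]
    rw [show ((-(Real.pi * (k : ℝ) / a)) * Complex.I : ℂ) =
        ((-(Real.pi * (k : ℝ) / a) : ℝ) : ℂ) * Complex.I by push_cast; ring, he, one_mul]
    rw [Complex.norm_real, Complex.norm_real, Complex.norm_real, Complex.norm_real,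
      Real.norm_eq_abs, Real.norm_eq_abs, Real.norm_eq_abs, Real.norm_eq_abs,
      abs_of_nonneg (div_nonneg (add_nonneg hlam.le (Nat.cast_nonneg k)) hlam.le),
      abs_of_pos (Real.rpow_pos_of_pos hz (-lam)), ← hxdef]
  -- nonnegativity helpers
  have hexp0 : ∀ y : ℝ, (0 : ℝ) ≤ Real.exp y := fun y => (Real.exp_pos y).le
  have hp1 : ∀ k : ℕ, (0 : ℝ) ≤ t ^ (2 * lam / a) * (t ^ (2 / a)) ^ k := fun k =>
    mul_nonneg (Real.rpow_pos_of_pos ht _).le (pow_nonneg (Real.rpow_pos_of_pos ht _).le k)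
  have hA1n : ∀ k : ℕ, (0 : ℝ) ≤ Real.exp lam * Real.exp 1 ^ k / lam := fun k =>
    div_nonneg (mul_nonneg (hexp0 _) (pow_nonneg (hexp0 _) _)) hlam.le
  have hB2n : ∀ k : ℕ, (0 : ℝ) ≤ t ^ (2 * lam / a) * (t ^ (2 / a)) ^ k * Real.exp (t ^ 2) *
      (Real.exp (2 * lam / a + 1) * Real.exp (2 / a) ^ k / (((k / M : ℕ).factorial : ℕ) : ℝ)) :=
    fun k => mul_nonneg (mul_nonneg (hp1 k) (hexp0 _))
      (div_nonneg (mul_nonneg (hexp0 _) (pow_nonneg (hexp0 _) _)) (Nat.cast_nonneg _))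
  -- the pointwise bound
  have hbound : ∀ k : ℕ, ‖kernelTerm a lam z w k‖ ≤
      Real.exp lam * Real.exp 1 ^ k / lam * z ^ (-lam) *
        (t ^ (2 * lam / a) * (t ^ (2 / a)) ^ k * Real.exp (t ^ 2) *
          (Real.exp (2 * lam / a + 1) * Real.exp (2 / a) ^ k / (((k / M : ℕ).factorial : ℕ) : ℝ))) *
        (2 ^ k * (Real.exp (((L - 1 : ℕ) : ℝ) * (L : ℝ)) * Real.exp (((L - 1 : ℕ) : ℝ)) ^ k) *
          (Real.exp ((L : ℝ) / 4) * Real.exp ((1 : ℝ) / 4) ^ k)) := by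
    intro k
    rw [hnorm k]
    have hb1 : (lam + (k : ℝ)) / lam ≤ Real.exp lam * Real.exp 1 ^ k / lam := by
      have h1 : lam + (k : ℝ) ≤ Real.exp (lam + (k : ℝ)) := by
        linarith [Real.add_one_le_exp (lam + (k : ℝ))]
      have e : Real.exp (lam + (k : ℝ)) = Real.exp lam * Real.exp 1 ^ k := by
        rw [Real.exp_add]
        congr 1
        rw [← Real.exp_nat_mul, mul_one]
      exact (div_le_div_iff_of_pos_right hlam).mpr (h1.trans_eq e)
    have hb2 : |besselJ (2 * ((k : ℝ) + lam) / a) x| ≤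
        t ^ (2 * lam / a) * (t ^ (2 / a)) ^ k * Real.exp (t ^ 2) *
          (Real.exp (2 * lam / a + 1) * Real.exp (2 / a) ^ k / (((k / M : ℕ).factorial : ℕ) : ℝ)) := by
      have hbb := besselJ_bound (ν := 2 * ((k : ℝ) + lam) / a) (x := x) (hν k).le hx
      rw [← htdef] at hbb
      have hsplit : t ^ (2 * ((k : ℝ) + lam) / a) = t ^ (2 * lam / a) * (t ^ (2 / a)) ^ k := by
        rw [show 2 * ((k : ℝ) + lam) / a = 2 * lam / a + 2 / a * (k : ℝ) by ring,
          Real.rpow_add ht]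
        congr 1
        rw [Real.rpow_mul ht.le, Real.rpow_natCast]
      have hG := one_div_gamma_le (hν k) (hq k)
      have hsplitexp : Real.exp (2 * ((k : ℝ) + lam) / a + 1) =
          Real.exp (2 * lam / a + 1) * Real.exp (2 / a) ^ k := by
        rw [show 2 * ((k : ℝ) + lam) / a + 1 = (2 * lam / a + 1) + (k : ℝ) * (2 / a) by ring,
          Real.exp_add, Real.exp_nat_mul]
      calc |besselJ (2 * ((k : ℝ) + lam) / a) x|
          ≤ t ^ (2 * ((k : ℝ) + lam) / a) * Real.exp (t ^ 2) /
              Real.Gamma (2 * ((k : ℝ) + lam) / a + 1) := hbb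
        _ = t ^ (2 * ((k : ℝ) + lam) / a) * Real.exp (t ^ 2) *
              (1 / Real.Gamma (2 * ((k : ℝ) + lam) / a + 1)) := by ring
        _ ≤ t ^ (2 * ((k : ℝ) + lam) / a) * Real.exp (t ^ 2) *
              (Real.exp (2 * ((k : ℝ) + lam) / a + 1) / (((k / M : ℕ).factorial : ℕ) : ℝ)) := by
            exact mul_le_mul_of_nonneg_left hG
              (mul_nonneg (Real.rpow_pos_of_pos ht _).le (hexp0 _))
        _ = t ^ (2 * lam / a) * (t ^ (2 / a)) ^ k * Real.exp (t ^ 2) *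
              (Real.exp (2 * lam / a + 1) * Real.exp (2 / a) ^ k /
                (((k / M : ℕ).factorial : ℕ) : ℝ)) := by
            rw [hsplit, hsplitexp]
    have hb3 : |gegenbauerC lam k w| ≤
        2 ^ k * (Real.exp (((L - 1 : ℕ) : ℝ) * (L : ℝ)) * Real.exp (((L - 1 : ℕ) : ℝ)) ^ k) *
          (Real.exp ((L : ℝ) / 4) * Real.exp ((1 : ℝ) / 4) ^ k) := by
      refine (gegenbauer_bound hlam hL1 hlamL k habsw).trans ?_
      have hA : ((L : ℝ) + k) ^ (L - 1) ≤
          Real.exp (((L - 1 : ℕ) : ℝ) * (L : ℝ)) * Real.exp (((L - 1 : ℕ) : ℝ)) ^ k := by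
        have h1 : (L : ℝ) + (k : ℝ) ≤ Real.exp ((L : ℝ) + (k : ℝ)) := by
          linarith [Real.add_one_le_exp ((L : ℝ) + (k : ℝ))]
        have h2 : ((L : ℝ) + (k : ℝ)) ^ (L - 1) ≤ (Real.exp ((L : ℝ) + (k : ℝ))) ^ (L - 1) :=
          pow_le_pow_left₀ (by positivity) h1 _
        have h3 : (Real.exp ((L : ℝ) + (k : ℝ))) ^ (L - 1) =
            Real.exp (((L - 1 : ℕ) : ℝ) * ((L : ℝ) + (k : ℝ))) := (Real.exp_nat_mul _ _).symm
        have h4 : Real.exp (((L - 1 : ℕ) : ℝ) * ((L : ℝ) + (k : ℝ))) =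
            Real.exp (((L - 1 : ℕ) : ℝ) * (L : ℝ)) * Real.exp (((L - 1 : ℕ) : ℝ)) ^ k := by
          rw [show ((L - 1 : ℕ) : ℝ) * ((L : ℝ) + (k : ℝ)) =
            ((L - 1 : ℕ) : ℝ) * (L : ℝ) + (k : ℝ) * ((L - 1 : ℕ) : ℝ) by ring,
            Real.exp_add, Real.exp_nat_mul, Real.exp_nat_mul]
        calc ((L : ℝ) + (k : ℝ)) ^ (L - 1) ≤ (Real.exp ((L : ℝ) + (k : ℝ))) ^ (L - 1) := h2
          _ = _ := h3.trans h4
      have hBx : Real.exp (((L : ℝ) + (k : ℝ)) / 4) =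
          Real.exp ((L : ℝ) / 4) * Real.exp ((1 : ℝ) / 4) ^ k := by
        rw [show ((L : ℝ) + (k : ℝ)) / 4 = (L : ℝ) / 4 + (k : ℝ) * ((1 : ℝ) / 4) by ring,
          Real.exp_add, Real.exp_nat_mul]
      calc (2 : ℝ) ^ k * ((L : ℝ) + k) ^ (L - 1) * Real.exp (((L : ℝ) + k) / 4)
          ≤ 2 ^ k * (Real.exp (((L - 1 : ℕ) : ℝ) * (L : ℝ)) * Real.exp (((L - 1 : ℕ) : ℝ)) ^ k) *
              Real.exp (((L : ℝ) + k) / 4) := by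
            exact mul_le_mul_of_nonneg_right
              (mul_le_mul_of_nonneg_left hA (by positivity)) (hexp0 _)
        _ = _ := by rw [hBx]
    have s1 : (lam + (k : ℝ)) / lam * z ^ (-lam) ≤
        Real.exp lam * Real.exp 1 ^ k / lam * z ^ (-lam) :=
      mul_le_mul_of_nonneg_right hb1 (Real.rpow_nonneg hz.le _)
    have s2 := mul_le_mul s1 hb2 (abs_nonneg _)
      (mul_nonneg (hA1n k) (Real.rpow_nonneg hz.le _))
    exact mul_le_mul s2 hb3 (abs_nonneg _)
      (mul_nonneg (mul_nonneg (hA1n k) (Real.rpow_nonneg hz.le _)) (hB2n k))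
  -- summability of the bound
  set C1 : ℝ := Real.exp lam / lam * z ^ (-lam) * t ^ (2 * lam / a) * Real.exp (t ^ 2) *
      Real.exp (2 * lam / a + 1) * Real.exp (((L - 1 : ℕ) : ℝ) * (L : ℝ)) *
      Real.exp ((L : ℝ) / 4) with hC1
  set S1 : ℝ := Real.exp 1 * t ^ (2 / a) * Real.exp (2 / a) * 2 * Real.exp (((L - 1 : ℕ) : ℝ)) *
      Real.exp ((1 : ℝ) / 4) with hS1
  have hS1pos : (0 : ℝ) ≤ S1 := by
    rw [hS1]
    have := (Real.rpow_pos_of_pos ht (2 / a)).le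
    positivity
  have hgsum : Summable (fun k : ℕ =>
      Real.exp lam * Real.exp 1 ^ k / lam * z ^ (-lam) *
        (t ^ (2 * lam / a) * (t ^ (2 / a)) ^ k * Real.exp (t ^ 2) *
          (Real.exp (2 * lam / a + 1) * Real.exp (2 / a) ^ k / (((k / M : ℕ).factorial : ℕ) : ℝ))) *
        (2 ^ k * (Real.exp (((L - 1 : ℕ) : ℝ) * (L : ℝ)) * Real.exp (((L - 1 : ℕ) : ℝ)) ^ k) *
          (Real.exp ((L : ℝ) / 4) * Real.exp ((1 : ℝ) / 4) ^ k))) := by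
    have h0 := (summable_geom_div_fact S1 hS1pos M hM0).mul_left C1
    refine h0.congr fun k => ?_
    rw [hC1, hS1]
    ring
  have hS : Summable (fun k : ℕ => ‖kernelTerm a lam z w k‖) :=
    Summable.of_nonneg_of_le (fun k => norm_nonneg _) hbound hgsum
  exact ⟨hS, hS.of_norm⟩
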